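/- Let A and B be uniform algebras on compact Hausdorff spaces X and Y, and c ≠ 0. Suppose S : A → B is a bijection satisfying Ran_π(Sf · (Sg + c·1)) = Ran_π(f · (g + c·1)) for all f, g ∈ A and fixing constants. Then S maps the set of peaking functions of A bijectively onto the set of peaking functions of B. -/

import Mathlib

/-- The peripheral range of a continuous function on a compact space. -/
def Ranπ {X : Type*} [TopologicalSpace X] [CompactSpace X] (f : C(X, ℂ)) : Set ℂ :=
  {z | z ∈ Set.range f ∧ ‖z‖ = ‖f‖}

lemma ranpi_smul {X : Type*} [TopologicalSpace X] [CompactSpace X]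
    (c : ℂ) (hc : c ≠ 0) (h : C(X, ℂ)) :
    Ranπ (c • h) = (c * ·) '' Ranπ h := by
  ext z
  simp only [Ranπ, Set.mem_setOf_eq, Set.mem_image, Set.mem_range]
  constructor
  · rintro ⟨⟨x, hx⟩, habs⟩
    refine ⟨h x, ⟨⟨x, rfl⟩, ?_⟩, by simpa using hx⟩
    rw [← hx, norm_smul] at habs
    have hc' : ‖c‖ ≠ 0 := by simpa using hc
    have e : ‖(c • h) x‖ = ‖c‖ * ‖h x‖ := by simp
    rw [e] at habs
    exact mul_left_cancel₀ hc' habs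
  · rintro ⟨w, ⟨⟨x, hx⟩, habs⟩, rfl⟩
    refine ⟨⟨x, by simp [hx]⟩, ?_⟩
    rw [norm_smul]
    simp [habs]

set_option synthInstance.maxHeartbeats 1000000 in
theorem stmt13 {X Y : Type*} [TopologicalSpace X] [CompactSpace X] [T2Space X]
    [TopologicalSpace Y] [CompactSpace Y] [T2Space Y]
    (A : Subalgebra ℂ C(X, ℂ)) (hA : IsClosed (A : Set C(X, ℂ)))
    (hAsep : ∀ x y : X, x ≠ y → ∃ f ∈ A, f x ≠ f y)
    (B : Subalgebra ℂ C(Y, ℂ)) (hB : IsClosed (B : Set C(Y, ℂ)))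
    (hBsep : ∀ x y : Y, x ≠ y → ∃ f ∈ B, f x ≠ f y)
    (c : ℂ) (hc : c ≠ 0) (S : A → B)
    (hSeq : ∀ f g : A,
      Ranπ ((S f * (S g + c • 1) : B) : C(Y, ℂ)) = Ranπ ((f * (g + c • 1) : A) : C(X, ℂ)))
    (hSbij : Function.Bijective S)
    (hSconst : ∀ lam : ℂ, S (lam • 1) = lam • 1) :
    Set.BijOn S {f : A | Ranπ ((f : C(X, ℂ))) = {1}}
      {g : B | Ranπ ((g : C(Y, ℂ))) = {1}} := by
  have h0 : S 0 = 0 := by simpa using hSconst 0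
  have key : ∀ f : A, Ranπ ((S f : C(Y, ℂ))) = Ranπ ((f : C(X, ℂ))) := by
    intro f
    have h := hSeq f 0
    rw [h0, zero_add, zero_add] at h
    have e1 : ((S f * (c • 1) : B) : C(Y, ℂ)) = c • (S f : C(Y, ℂ)) := by
      ext y; simp [mul_comm]
    have e2 : ((f * (c • 1) : A) : C(X, ℂ)) = c • (f : C(X, ℂ)) := by
      ext x; simp [mul_comm]
    rw [e1, e2, ranpi_smul c hc, ranpi_smul c hc] at h
    exact Set.image_injective.mpr (mul_right_injective₀ hc) h
  refine ⟨?_, hSbij.1.injOn, ?_⟩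
  · intro f hf
    simp only [Set.mem_setOf_eq] at hf ⊢
    rw [key f]; exact hf
  · intro g hg
    obtain ⟨f, rfl⟩ := hSbij.2 g
    exact ⟨f, by simpa only [Set.mem_setOf_eq, key f] using hg, rfl⟩
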